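/- Let Ω ⊆ ℝ^d be open and bounded, p: Ω → (1,∞) measurable with 1 < p⁻ := ess inf p ≤ p⁺ := ess sup p < ∞, and q = p' the pointwise conjugate exponent. Let δ ≥ 0 and define A(x,a) = (δ+|a|)^{p(x)-2} a. If u ∈ W^{1,p(·)}_0(Ω) satisfies ∫_Ω A(x,∇u)·∇v dx = ∫_Ω f v dx for all v ∈ W^{1,p(·)}_0(Ω), where f ∈ L^{p'(·)}(Ω), then u is the unique such solution (any two solutions coincide a.e.). -/

import Mathlib

open MeasureTheory Real

lemma gmono (p δ : ℝ) (hp : 1 < p) (hδ : 0 ≤ δ) {s t : ℝ} (hs : 0 ≤ s) (hst : s < t) :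
    (δ + s) ^ (p - 2) * s < (δ + t) ^ (p - 2) * t := by
  have ht : 0 < t := hs.trans_lt hst
  have hδt : 0 < δ + t := by linarith
  rcases eq_or_lt_of_le (by linarith : (0:ℝ) ≤ δ + s) with h0 | h0
  · -- δ + s = 0, so δ = 0, s = 0
    have hs0 : s = 0 := by linarith [hδ, hs]
    rw [hs0, mul_zero]
    positivity
  · have key1 : (δ + s) ^ (p - 2) * s = (δ + s) ^ (p - 1) * (s / (δ + s)) := by
      have : (δ + s) ^ (p - 1) = (δ + s) ^ (p - 2) * (δ + s) := by
        rw [← Real.rpow_add_one h0.ne']; ring_nf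
      rw [this]; field_simp
    have key2 : (δ + t) ^ (p - 2) * t = (δ + t) ^ (p - 1) * (t / (δ + t)) := by
      have : (δ + t) ^ (p - 1) = (δ + t) ^ (p - 2) * (δ + t) := by
        rw [← Real.rpow_add_one hδt.ne']; ring_nf
      rw [this]; field_simp
    rw [key1, key2]
    have hA : (δ + s) ^ (p - 1) < (δ + t) ^ (p - 1) :=
      Real.rpow_lt_rpow h0.le (by linarith) (by linarith)
    have hB : s / (δ + s) ≤ t / (δ + t) := by
      rw [div_le_div_iff₀ h0 hδt]; nlinarith
    have hB' : 0 < t / (δ + t) := by positivity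
    calc (δ + s) ^ (p - 1) * (s / (δ + s)) ≤ (δ + s) ^ (p - 1) * (t / (δ + t)) := by
          apply mul_le_mul_of_nonneg_left hB (Real.rpow_nonneg h0.le _)
      _ < (δ + t) ^ (p - 1) * (t / (δ + t)) := by
          exact mul_lt_mul_of_pos_right hA hB'

lemma key_lt {E : Type*} [NormedAddCommGroup E] [InnerProductSpace ℝ E]
    (p δ : ℝ) (hp : 1 < p) (hδ : 0 ≤ δ) {a b : E} (hlt : ‖b‖ < ‖a‖) :
    0 < (inner ℝ (((δ + ‖a‖) ^ (p - 2) : ℝ) • a - ((δ + ‖b‖) ^ (p - 2) : ℝ) • b) (a - b) : ℝ) := by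
  set α := ((δ + ‖a‖) ^ (p - 2) : ℝ)
  set β := ((δ + ‖b‖) ^ (p - 2) : ℝ)
  have hα : 0 ≤ α := Real.rpow_nonneg (by positivity) _
  have hβ : 0 ≤ β := Real.rpow_nonneg (by positivity) _
  have hexp : (inner ℝ (α • a - β • b) (a - b) : ℝ)
      = α * ‖a‖ ^ 2 + β * ‖b‖ ^ 2 - (α + β) * (inner ℝ a b : ℝ) := by
    rw [inner_sub_left, inner_sub_right, inner_sub_right, real_inner_smul_left,
      real_inner_smul_left, real_inner_smul_left, real_inner_smul_left,
      real_inner_self_eq_norm_sq, real_inner_self_eq_norm_sq, real_inner_comm b a]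
    ring
  rw [hexp]
  have hcs : (inner ℝ a b : ℝ) ≤ ‖a‖ * ‖b‖ := real_inner_le_norm a b
  have hg : β * ‖b‖ < α * ‖a‖ := by
    have := gmono p δ hp hδ (norm_nonneg b) hlt
    simpa [α, β, mul_comm] using this
  nlinarith [norm_nonneg a, norm_nonneg b]

lemma key_pos {E : Type*} [NormedAddCommGroup E] [InnerProductSpace ℝ E]
    (p δ : ℝ) (hp : 1 < p) (hδ : 0 ≤ δ) {a b : E} (hab : a ≠ b) :
    0 < (inner ℝ (((δ + ‖a‖) ^ (p - 2) : ℝ) • a - ((δ + ‖b‖) ^ (p - 2) : ℝ) • b) (a - b) : ℝ) := by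
  rcases lt_trichotomy ‖b‖ ‖a‖ with h | h | h
  · exact key_lt p δ hp hδ h
  · -- equal norms
    have hα : ((δ + ‖a‖) ^ (p - 2) : ℝ) = (δ + ‖b‖) ^ (p - 2) := by rw [h]
    have ha0 : a ≠ 0 := by
      rintro rfl
      simp only [norm_zero] at h
      exact hab (norm_eq_zero.mp h).symm
    have hpos : (0:ℝ) < (δ + ‖a‖) ^ (p - 2) := by
      apply Real.rpow_pos_of_pos
      have := norm_pos_iff.mpr ha0
      linarith
    have : ((δ + ‖a‖) ^ (p - 2) : ℝ) • a - ((δ + ‖b‖) ^ (p - 2) : ℝ) • b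
        = ((δ + ‖a‖) ^ (p - 2) : ℝ) • (a - b) := by rw [← hα, smul_sub]
    rw [this, real_inner_smul_left, real_inner_self_eq_norm_sq]
    have : a - b ≠ 0 := sub_ne_zero.mpr hab
    have h2 : 0 < ‖a - b‖ := norm_pos_iff.mpr this
    positivity
  · have := key_lt p δ hp hδ (a := b) (b := a) h
    have hswap : (inner ℝ (((δ + ‖b‖) ^ (p - 2) : ℝ) • b - ((δ + ‖a‖) ^ (p - 2) : ℝ) • a) (b - a) : ℝ)
        = (inner ℝ (((δ + ‖a‖) ^ (p - 2) : ℝ) • a - ((δ + ‖b‖) ^ (p - 2) : ℝ) • b) (a - b) : ℝ) := by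
      rw [← neg_sub (((δ + ‖a‖) ^ (p - 2) : ℝ) • a), ← neg_sub a, inner_neg_neg]
    rw [hswap] at this
    exact this


/-- Uniqueness of weak solutions of the `p(·)`-Dirichlet problem.
The variable-exponent Sobolev space with zero boundary values is modelled as a
set `W` of pairs `(v, ∇v)` (a function together with its weak gradient) that is
closed under differences and satisfies a Poincaré-type property (vanishing weak
gradient implies vanishing function, encoding the zero boundary values and
`|Γ_D| > 0`). -/
theorem stmt9 {d : ℕ} (Ω : Set (EuclideanSpace ℝ (Fin d)))
    (hΩo : IsOpen Ω) (hΩb : Bornology.IsBounded Ω)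
    (p : EuclideanSpace ℝ (Fin d) → ℝ) (hpmeas : Measurable p)
    (pm pM : ℝ) (hpm : 1 < pm) (hpmM : pm ≤ pM)
    (hbound : ∀ᵐ x ∂(volume.restrict Ω), pm ≤ p x ∧ p x ≤ pM)
    (δ : ℝ) (hδ : 0 ≤ δ)
    (f : EuclideanSpace ℝ (Fin d) → ℝ)
    (W : Set ((EuclideanSpace ℝ (Fin d) → ℝ) ×
      (EuclideanSpace ℝ (Fin d) → EuclideanSpace ℝ (Fin d))))
    (hWsub : ∀ v w, v ∈ W → w ∈ W → (v.1 - w.1, v.2 - w.2) ∈ W)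
    (hWpoincare : ∀ v ∈ W, (∀ᵐ x ∂(volume.restrict Ω), v.2 x = 0) →
      (∀ᵐ x ∂(volume.restrict Ω), v.1 x = 0))
    (u₁ u₂ : (EuclideanSpace ℝ (Fin d) → ℝ) ×
      (EuclideanSpace ℝ (Fin d) → EuclideanSpace ℝ (Fin d)))
    (hu₁ : u₁ ∈ W) (hu₂ : u₂ ∈ W)
    (hint₁ : ∀ v ∈ W, Integrable
      (fun x => (inner ℝ ((δ + ‖u₁.2 x‖) ^ (p x - 2) • u₁.2 x) (v.2 x) : ℝ))
      (volume.restrict Ω))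
    (hint₂ : ∀ v ∈ W, Integrable
      (fun x => (inner ℝ ((δ + ‖u₂.2 x‖) ^ (p x - 2) • u₂.2 x) (v.2 x) : ℝ))
      (volume.restrict Ω))
    (heq₁ : ∀ v ∈ W,
      (∫ x in Ω, (inner ℝ ((δ + ‖u₁.2 x‖) ^ (p x - 2) • u₁.2 x) (v.2 x) : ℝ)) =
        ∫ x in Ω, f x * v.1 x)
    (heq₂ : ∀ v ∈ W,
      (∫ x in Ω, (inner ℝ ((δ + ‖u₂.2 x‖) ^ (p x - 2) • u₂.2 x) (v.2 x) : ℝ)) =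
        ∫ x in Ω, f x * v.1 x) :
    ∀ᵐ x ∂(volume.restrict Ω), u₁.1 x = u₂.1 x := by
  set v : (EuclideanSpace ℝ (Fin d) → ℝ) ×
      (EuclideanSpace ℝ (Fin d) → EuclideanSpace ℝ (Fin d)) :=
    (u₁.1 - u₂.1, u₁.2 - u₂.2) with hv_def
  have hv : v ∈ W := hWsub u₁ u₂ hu₁ hu₂
  -- the integrand
  set h : EuclideanSpace ℝ (Fin d) → ℝ := fun x =>
    (inner ℝ ((δ + ‖u₁.2 x‖) ^ (p x - 2) • u₁.2 x - (δ + ‖u₂.2 x‖) ^ (p x - 2) • u₂.2 x)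
      (u₁.2 x - u₂.2 x) : ℝ) with hh_def
  have hv2 : ∀ x, v.2 x = u₁.2 x - u₂.2 x := fun x => rfl
  have hheq : h = fun x =>
      (inner ℝ ((δ + ‖u₁.2 x‖) ^ (p x - 2) • u₁.2 x) (v.2 x) : ℝ) -
      (inner ℝ ((δ + ‖u₂.2 x‖) ^ (p x - 2) • u₂.2 x) (v.2 x) : ℝ) := by
    funext x
    rw [hh_def]
    simp only [inner_sub_left, hv2, Pi.sub_apply]
  have hint : Integrable h (volume.restrict Ω) := by
    rw [hheq]; exact (hint₁ v hv).sub (hint₂ v hv)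
  have hzero : ∫ x in Ω, h x = 0 := by
    rw [hheq]
    rw [integral_sub (hint₁ v hv) (hint₂ v hv), heq₁ v hv, heq₂ v hv, sub_self]
  have hnonneg : 0 ≤ᵐ[volume.restrict Ω] h := by
    filter_upwards [hbound] with x hx
    rcases eq_or_ne (u₁.2 x) (u₂.2 x) with he | hne
    · simp only [hh_def, Pi.zero_apply, he, sub_self, inner_zero_right, le_refl]
    · exact le_of_lt (key_pos (p x) δ (lt_of_lt_of_le hpm hx.1) hδ hne)
  have hae : h =ᵐ[volume.restrict Ω] 0 :=
    (integral_eq_zero_iff_of_nonneg_ae hnonneg hint).mp hzero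
  have hgrad : ∀ᵐ x ∂(volume.restrict Ω), v.2 x = 0 := by
    filter_upwards [hbound, hae] with x hx hx0
    by_contra hne
    have hne' : u₁.2 x ≠ u₂.2 x := by
      intro he; exact hne (by simp [hv_def, Pi.sub_apply, he])
    have hx0' : h x = 0 := by simpa using hx0
    have hpos : 0 < h x := by
      rw [hh_def]; exact key_pos (p x) δ (lt_of_lt_of_le hpm hx.1) hδ hne'
    linarith
  have := hWpoincare v hv hgrad
  filter_upwards [this] with x hx
  have : u₁.1 x - u₂.1 x = 0 := hx
  linarith
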